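/- Let f : [0, ∞) → ℝ be given by f(r) = −(1/2)·cosh⁻²((r − 20)/2). There is no continuously differentiable function u : [0, ∞) → ℝ with u(r) > 0 for all r ≥ 0 satisfying the integral identity r·u'(r) = ∫₀^r s·f(s)·u(s) ds for all r ≥ 0. (This identity is the radial form of Δu = f·u with u'(0) = 0; consequently the 'KdV ring' potential q₀(x, y) = f(√(x² + y²)) admits no positive radially symmetric solution of Δu = q₀u and is not of conductivity type.) -/

import Mathlib

/-- The 'KdV ring' radial profile `f(r) = −(1/2)·cosh⁻²((r − 20)/2)` admits no positive
`C¹` function `u` on `[0, ∞)` satisfying the radial Schrödinger identity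
`r·u'(r) = ∫₀^r s·f(s)·u(s) ds`; hence the corresponding radial potential is not of
conductivity type. -/
theorem statement10 (f : ℝ → ℝ)
    (hf : f = fun r => -(1 / 2) * (1 / Real.cosh ((r - 20) / 2)) ^ 2) :
    ¬ ∃ u : ℝ → ℝ,
        ContDiffOn ℝ 1 u (Set.Ici (0 : ℝ))
        ∧ (∀ r ∈ Set.Ici (0 : ℝ), 0 < u r)
        ∧ (∀ r ∈ Set.Ici (0 : ℝ),
            r * derivWithin u (Set.Ici (0 : ℝ)) r = ∫ s in (0 : ℝ)..r, s * f s * u s) := by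
  rintro ⟨u, hu, hupos, heq⟩
  -- f is everywhere negative and continuous
  have hf_neg : ∀ r : ℝ, f r < 0 := by
    intro r
    rw [hf]
    have h1 : 0 < Real.cosh ((r - 20) / 2) := Real.cosh_pos _
    have h2 : 0 < (1 / Real.cosh ((r - 20) / 2)) ^ 2 := by positivity
    nlinarith
  have hf_cont : Continuous f := by
    rw [hf]
    fun_prop (disch := intro x; exact (Real.cosh_pos _).ne')
  have hu_cont : ContinuousOn u (Set.Ici 0) := hu.continuousOn
  set g : ℝ → ℝ := fun s => s * f s * u s with hg
  have hg_cont : ContinuousOn g (Set.Ici 0) := by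
    exact (continuousOn_id.mul hf_cont.continuousOn).mul hu_cont
  have hg_int : ∀ a b : ℝ, 0 ≤ a → 0 ≤ b → IntervalIntegrable g MeasureTheory.volume a b := by
    intro a b ha hb
    apply (hg_cont.mono ?_).intervalIntegrable
    intro x hx
    rcases Set.mem_uIcc.mp hx with h | h
    · exact le_trans ha h.1
    · exact le_trans hb h.1
  set A : ℝ := -∫ s in (0:ℝ)..1, g s with hA_def
  have hA : 0 < A := by
    have h : 0 < ∫ s in (0:ℝ)..1, -g s := by
      apply intervalIntegral.intervalIntegral_pos_of_pos_on
      · exact (hg_int 0 1 le_rfl zero_le_one).neg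
      · intro x hx
        have hx0 : (0:ℝ) < x := hx.1
        have hfx := hf_neg x
        have hux := hupos x (le_of_lt hx0)
        simp only [hg]
        have h3 : 0 < x * -f x := mul_pos hx0 (neg_pos.mpr hfx)
        nlinarith [mul_pos h3 hux]
      · norm_num
    rwa [intervalIntegral.integral_neg] at h
  -- for r ≥ 1, V(r) ≤ -A
  have hV : ∀ r : ℝ, 1 ≤ r → (∫ s in (0:ℝ)..r, g s) ≤ -A := by
    intro r hr
    have h0r : (0:ℝ) ≤ r := by linarith
    have hadd := intervalIntegral.integral_add_adjacent_intervals
      (hg_int 0 1 le_rfl zero_le_one) (hg_int 1 r zero_le_one h0r)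
    have hle : (∫ s in (1:ℝ)..r, g s) ≤ 0 := by
      have h2 : 0 ≤ ∫ s in (1:ℝ)..r, -g s := by
        apply intervalIntegral.integral_nonneg hr
        intro x hx
        have hx1 : (1:ℝ) ≤ x := hx.1
        have hfx := hf_neg x
        have hux := hupos x (Set.mem_Ici.mpr (by linarith))
        simp only [hg]
        have h3 : 0 < x * -f x := mul_pos (by linarith) (neg_pos.mpr hfx)
        nlinarith [mul_pos h3 hux]
      rw [intervalIntegral.integral_neg] at h2
      linarith
    rw [← hadd]
    simp only [hA_def]
    linarith
  set u' : ℝ → ℝ := derivWithin u (Set.Ici (0:ℝ)) with hu'def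
  -- derivative bound for s ≥ 1
  have hderiv_le : ∀ s : ℝ, 1 ≤ s → u' s ≤ -A / s := by
    intro s hs
    have hs0 : (0:ℝ) < s := by linarith
    have h1 := heq s (Set.mem_Ici.mpr (by linarith))
    have h2 := hV s hs
    rw [← h1] at h2
    rw [le_div_iff₀ hs0]
    linarith [mul_comm s (u' s)]
  -- choose large r
  set r : ℝ := Real.exp ((u 1 + 1) / A) with hr_def
  have hu1 : 0 < u 1 := hupos 1 (by norm_num)
  have hr1 : 1 < r := by
    have hpos : 0 < (u 1 + 1) / A := div_pos (by linarith) hA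
    calc (1:ℝ) = Real.exp 0 := Real.exp_zero.symm
      _ < r := Real.exp_lt_exp.mpr hpos
  have hr1' : (1:ℝ) ≤ r := le_of_lt hr1
  -- FTC
  have hftc : (∫ s in (1:ℝ)..r, u' s) = u r - u 1 := by
    apply intervalIntegral.integral_eq_sub_of_hasDerivAt
    · intro x hx
      rw [Set.uIcc_of_le hr1'] at hx
      have hx0 : (0:ℝ) < x := by linarith [hx.1]
      have hd : HasDerivWithinAt u (u' x) (Set.Ici (0:ℝ)) x :=
        ((hu.differentiableOn one_ne_zero) x (le_of_lt hx0)).hasDerivWithinAt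
      exact hd.hasDerivAt (Ici_mem_nhds hx0)
    · apply ContinuousOn.intervalIntegrable
      apply (hu.continuousOn_derivWithin (uniqueDiffOn_Ici 0) le_rfl).mono
      rw [Set.uIcc_of_le hr1']
      intro x hx
      exact le_trans (by norm_num) hx.1
  -- integral comparison
  have hcmp : (∫ s in (1:ℝ)..r, u' s) ≤ ∫ s in (1:ℝ)..r, -A * s⁻¹ := by
    apply intervalIntegral.integral_mono_on hr1'
    · apply ContinuousOn.intervalIntegrable
      apply (hu.continuousOn_derivWithin (uniqueDiffOn_Ici 0) le_rfl).mono
      rw [Set.uIcc_of_le hr1']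
      intro x hx
      exact le_trans (by norm_num) hx.1
    · apply ContinuousOn.intervalIntegrable
      apply ContinuousOn.mul continuousOn_const
      apply ContinuousOn.inv₀ continuousOn_id
      intro x hx
      rw [Set.uIcc_of_le hr1'] at hx
      simp only [id_eq]
      exact ne_of_gt (by linarith [hx.1])
    · intro x hx
      have := hderiv_le x hx.1
      rw [div_eq_mul_inv] at this
      simpa using this
  have hval : (∫ s in (1:ℝ)..r, -A * s⁻¹) = -A * Real.log r := by
    rw [intervalIntegral.integral_const_mul, integral_inv]
    · rw [div_one]
    · rw [Set.uIcc_of_le hr1']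
      intro h
      exact absurd h.1 (by norm_num)
  have hlog : Real.log r = (u 1 + 1) / A := by
    rw [hr_def, Real.log_exp]
  have hur : u r ≤ -1 := by
    have h1 : u r - u 1 ≤ -A * Real.log r := by
      rw [← hftc, ← hval]; exact hcmp
    rw [hlog] at h1
    have h2 : A * ((u 1 + 1) / A) = u 1 + 1 := by field_simp
    nlinarith
  have := hupos r (Set.mem_Ici.mpr (by linarith))
  linarith
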